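/- For every t ≥ 1 and every m > ⌈n/t⌉ with m ≤ n, and every integer k, there exists a K_{1,t+1}-free graph G and a family of k independent n-sets in G having no rainbow independent m-set. Specifically, the disjoint union of ⌈n/t⌉ copies of the complete k-partite graph with all parts of size t, with I_i being the union of the i-th parts across all copies, works. -/

import Mathlib

open SimpleGraph Finset

/-- `S` is an independent set in `G`. -/
def IndepIn {V : Type*} (G : SimpleGraph V) (S : Finset V) : Prop :=
  ∀ u ∈ S, ∀ v ∈ S, ¬ G.Adj u v

/-- The family `I` admits a rainbow independent `m`-set in `G`: `m` distinct pairwise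
non-adjacent vertices, each chosen from a distinct member of the family. -/
def HasRainbowIndep {V ι : Type*} (G : SimpleGraph V) (I : ι → Finset V) (m : ℕ) : Prop :=
  ∃ (j : Fin m → ι) (v : Fin m → V), Function.Injective j ∧ Function.Injective v ∧
    (∀ i, v i ∈ I (j i)) ∧ ∀ i i' : Fin m, i ≠ i' → ¬ G.Adj (v i) (v i')

/-- `G` contains no induced copy of `H`. -/
def IndFree {V W : Type*} (G : SimpleGraph V) (H : SimpleGraph W) : Prop :=
  ¬ ∃ f : W ↪ V, ∀ a b : W, G.Adj (f a) (f b) ↔ H.Adj a b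

theorem star_free_lower (t n m k : ℕ) (ht : 1 ≤ t)
    (hm : (n + t - 1) / t < m) (hmn : m ≤ n) :
    ∃ (V : Type) (G : SimpleGraph V) (I : Fin k → Finset V),
      IndFree G (completeBipartiteGraph (Fin 1) (Fin (t + 1))) ∧
      (∀ i, (I i).card = n ∧ IndepIn G (I i)) ∧
      ¬ HasRainbowIndep G I m := by
  classical
  set q := (n + t - 1) / t with hq
  -- n ≤ q * t
  have hqt : n ≤ q * t := by
    have h1 := Nat.div_add_mod (n + t - 1) t
    have h2 := Nat.mod_lt (n + t - 1) (show 0 < t by omega)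
    have h3 : t * q + (n + t - 1) % t = n + t - 1 := h1
    have h4 : n ≤ t * q := by omega
    exact h4.trans_eq (Nat.mul_comm t q)
  refine ⟨Fin q × Fin k × Fin t,
    { Adj := fun a b => a.1 = b.1 ∧ a.2.1 ≠ b.2.1,
      symm := ⟨by intro a b h; exact ⟨h.1.symm, fun e => h.2 e.symm⟩⟩,
      loopless := ⟨by intro a h; exact h.2 rfl⟩ }, ?_⟩
  -- the embedding of the i-th fiber
  set V := Fin q × Fin k × Fin t
  let emb : Fin k → (Fin q × Fin t ↪ V) := fun i =>
    ⟨fun p => (p.1, i, p.2), by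
      intro p p' h
      have h' := Prod.ext_iff.mp h
      exact Prod.ext h'.1 (Prod.ext_iff.mp h'.2).2⟩
  have hcard : ∀ i, n ≤ ((univ : Finset (Fin q × Fin t)).map (emb i)).card := by
    intro i
    simpa using hqt
  have key : ∀ i : Fin k, ∃ S : Finset V,
      S ⊆ (univ : Finset (Fin q × Fin t)).map (emb i) ∧ S.card = n := fun i =>
    Finset.exists_subset_card_eq (hcard i)
  refine ⟨fun i => (key i).choose, ?_, ?_, ?_⟩
  · -- star-free
    rintro ⟨f, hf⟩
    set c := f (Sum.inl 0) with hc
    set w : Fin (t + 1) → V := fun j => f (Sum.inr j) with hw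
    have hadj : ∀ j, c.1 = (w j).1 ∧ c.2.1 ≠ (w j).2.1 := by
      intro j
      have := (hf (Sum.inl 0) (Sum.inr j)).2 (by simp)
      exact this
    have hnadj : ∀ j j' : Fin (t + 1), j ≠ j' → (w j).2.1 = (w j').2.1 := by
      intro j j' hne
      have h1 : ¬ ((w j).1 = (w j').1 ∧ (w j).2.1 ≠ (w j').2.1) := by
        intro h
        have := (hf (Sum.inr j) (Sum.inr j')).1 h
        simp at this
      have h2 : (w j).1 = (w j').1 := (hadj j).1.symm.trans (hadj j').1
      by_contra h
      exact h1 ⟨h2, h⟩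
    have hinj : Function.Injective (fun j : Fin (t + 1) => (w j).2.2) := by
      intro j j' h
      by_contra hne
      have e1 : (w j).1 = (w j').1 := (hadj j).1.symm.trans (hadj j').1
      have e2 : (w j).2.1 = (w j').2.1 := hnadj j j' hne
      have : w j = w j' := Prod.ext e1 (Prod.ext e2 h)
      exact hne (Sum.inr.inj (f.injective this))
    have := Fintype.card_le_of_injective _ hinj
    simp at this
  · -- each I i has card n and is independent
    intro i
    obtain ⟨hsub, hcardn⟩ := (key i).choose_spec
    have hmem : ∀ v ∈ (key i).choose, v.2.1 = i := by
      intro v hv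
      have := hsub hv
      simp only [Finset.mem_map, Finset.mem_univ, true_and] at this
      obtain ⟨p, hp⟩ := this
      rw [← hp]; rfl
    refine ⟨hcardn, fun u hu v hv hadj => ?_⟩
    exact hadj.2 ((hmem u hu).trans (hmem v hv).symm)
  · -- no rainbow independent m-set
    rintro ⟨j, v, hjinj, hvinj, hvmem, hnadj⟩
    have hpart : ∀ i, (v i).2.1 = j i := by
      intro i
      have hsub := ((key (j i)).choose_spec).1
      have := hsub (hvmem i)
      simp only [Finset.mem_map, Finset.mem_univ, true_and] at this
      obtain ⟨p, hp⟩ := this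
      rw [← hp]; rfl
    have hcinj : Function.Injective (fun i : Fin m => (v i).1) := by
      intro i i' h
      by_contra hne
      have hpne : (v i).2.1 ≠ (v i').2.1 := by
        rw [hpart i, hpart i']
        exact fun e => hne (hjinj e)
      exact hnadj i i' hne ⟨h, hpne⟩
    have := Fintype.card_le_of_injective _ hcinj
    simp only [Fintype.card_fin] at this
    omega
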